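/- Let G1 be a connected δ1-regular graph on n vertices and G2 be a connected δ2-regular graph on δ1 vertices, and write κ1 = κ(G1) and λi = λ(Gi) for i = 1,2. If κ1 ≥ 2, then min{λ1, λ2+1} ≤ λ(G1®G2). -/

import Mathlib

open SimpleGraph

section Defs

variable {V : Type*}

/-- The set of edges of `G` with one endpoint in `X` and the other outside `X`. -/
def edgeBoundary (G : SimpleGraph V) (X : Set V) : Set (Sym2 V) :=
  {e | e ∈ G.edgeSet ∧ ∃ u ∈ X, ∃ v ∈ Xᶜ, e = s(u, v)}

/-- The edge-connectivity `λ(G)`: the minimum number of edges whose removal disconnects `G`. -/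
noncomputable def edgeConn (G : SimpleGraph V) : ℕ :=
  sInf {k | ∃ F : Set (Sym2 V), F ⊆ G.edgeSet ∧ F.ncard = k ∧ ¬(G.deleteEdges F).Connected}

/-- `F` is a restricted edge-cut of `G`: removing `F` disconnects `G` and leaves no
isolated vertices. -/
def IsRestrictedEdgeCut (G : SimpleGraph V) (F : Set (Sym2 V)) : Prop :=
  F ⊆ G.edgeSet ∧ ¬(G.deleteEdges F).Connected ∧ ∀ v : V, ∃ w : V, (G.deleteEdges F).Adj v w

/-- The restricted edge-connectivity `λ'(G)`. -/
noncomputable def restrictedEdgeConn (G : SimpleGraph V) : ℕ :=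
  sInf {k | ∃ F : Set (Sym2 V), IsRestrictedEdgeCut G F ∧ F.ncard = k}

/-- The vertex-connectivity `κ(G)`: the minimum size of a set of vertices whose removal
leaves a disconnected graph or a graph with at most one vertex. -/
noncomputable def vertexConn (G : SimpleGraph V) : ℕ :=
  sInf {k | ∃ S : Set V, S.ncard = k ∧
    (¬(G.induce (Sᶜ : Set V)).Connected ∨ (Sᶜ : Set V).ncard ≤ 1)}

/-- The minimum edge-degree `ξ(G) = min {d(u) + d(v) - 2 : uv ∈ E(G)}`. -/
noncomputable def minEdgeDegree (G : SimpleGraph V) : ℕ :=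
  sInf {k | ∃ u v : V, G.Adj u v ∧ (G.neighborSet u).ncard + (G.neighborSet v).ncard - 2 = k}

/-- `G` is `λ'`-optimal if `λ'(G) = ξ(G)`. -/
def LambdaPrimeOptimal (G : SimpleGraph V) : Prop :=
  restrictedEdgeConn G = minEdgeDegree G

/-- The replacement product of `G1` and `G2` with respect to an edge-labelling `ℓ`,
where `ℓ x i` is the other endpoint of the edge of `G1` labelled `i` at the vertex `x`.
Vertices `(x, i)` and `(y, j)` are adjacent iff either `x = y` and `i j ∈ E(G2)`, or
`x y ∈ E(G1)` and the edge `x y` is labelled `i` at `x` and `j` at `y`. -/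
def replacementProduct {V1 V2 : Type*} (G1 : SimpleGraph V1) (G2 : SimpleGraph V2)
    (ℓ : V1 → V2 → V1) : SimpleGraph (V1 × V2) where
  Adj p q := (p.1 = q.1 ∧ G2.Adj p.2 q.2) ∨
    (G1.Adj p.1 q.1 ∧ ℓ p.1 p.2 = q.1 ∧ ℓ q.1 q.2 = p.1)
  symm := by
    refine ⟨?_⟩
    rintro p q (⟨h1, h2⟩ | ⟨h1, h2, h3⟩)
    · exact Or.inl ⟨h1.symm, h2.symm⟩
    · exact Or.inr ⟨h1.symm, h3, h2⟩
  loopless := by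
    refine ⟨?_⟩
    rintro p (⟨_, h⟩ | ⟨h, _⟩)
    · exact G2.loopless.irrefl _ h
    · exact G1.loopless.irrefl _ h

/-- `ℓ` is a valid edge-labelling of `G1` for the replacement product:
for each vertex `x`, `ℓ x` is injective and `ℓ x i` is always a neighbour of `x`
(hence `ℓ x` enumerates the neighbours of `x` when `G1` is `|V2|`-regular). -/
def IsRPLabelling {V1 V2 : Type*} (G1 : SimpleGraph V1) (ℓ : V1 → V2 → V1) : Prop :=
  (∀ x, Function.Injective (ℓ x)) ∧ ∀ x i, G1.Adj x (ℓ x i)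

end Defs

section Aux

variable {W : Type*}

lemma reach_closed {H : SimpleGraph W} {P : W → Prop}
    (hP : ∀ u v, H.Adj u v → P u → P v) :
    ∀ {u v : W}, H.Reachable u v → P u → P v := by
  intro u v h
  obtain ⟨w⟩ := h
  induction w with
  | nil => exact id
  | cons h p ih => exact fun hu => ih (hP _ _ h hu)

lemma edgeConn_le_of_cut {H : SimpleGraph W} {F : Set (Sym2 W)}
    (hF : F ⊆ H.edgeSet) (hdis : ¬(H.deleteEdges F).Connected) : edgeConn H ≤ F.ncard :=
  Nat.sInf_le ⟨F, hF, rfl, hdis⟩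

lemma edgeConn_le_boundary {H : SimpleGraph W} {S : Set W}
    (hS : S.Nonempty) (hS' : Sᶜ.Nonempty) :
    edgeConn H ≤ (edgeBoundary H S).ncard := by
  apply edgeConn_le_of_cut (fun e he => he.1)
  intro hcon
  obtain ⟨a, ha⟩ := hS
  obtain ⟨b, hb⟩ := hS'
  have hclosed : ∀ u v, (H.deleteEdges (edgeBoundary H S)).Adj u v → u ∈ S → v ∈ S := by
    intro u v huv hu
    by_contra hv
    obtain ⟨h1, h2⟩ := SimpleGraph.deleteEdges_adj.mp huv
    exact h2 ⟨(SimpleGraph.mem_edgeSet _).mpr h1, u, hu, v, hv, rfl⟩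
  exact hb (reach_closed hclosed (hcon.preconnected a b) ha)

end Aux


/-- Theorem 3.1, bound (3.2). If `G1` is a connected `δ1`-regular graph
on `n` vertices and `G2` is a connected `δ2`-regular graph on `δ1` vertices, and
`κ(G1) ≥ 2`, then `min {λ1, λ2 + 1} ≤ λ(G1 ® G2)`. -/
theorem edgeConn_replacementProduct_lower_bound_of_two_connected
    {V1 V2 : Type*} [Fintype V1] [Fintype V2] {n δ1 δ2 : ℕ}
    (G1 : SimpleGraph V1) (G2 : SimpleGraph V2) (ℓ : V1 → V2 → V1)
    (hℓ : IsRPLabelling G1 ℓ)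
    (hc1 : G1.Connected) (hc2 : G2.Connected)
    (hr1 : ∀ x : V1, (G1.neighborSet x).ncard = δ1)
    (hr2 : ∀ i : V2, (G2.neighborSet i).ncard = δ2)
    (hn : Fintype.card V1 = n) (hd : Fintype.card V2 = δ1)
    (hκ : 2 ≤ vertexConn G1) :
    min (edgeConn G1) (edgeConn G2 + 1) ≤ edgeConn (replacementProduct G1 G2 ℓ) := by
  classical
  obtain ⟨hinj, hadj⟩ := hℓ
  set G := replacementProduct G1 G2 ℓ with hGdef
  unfold vertexConn at hκ
  -- |V1| ≥ 2
  have hV1 : 2 ≤ Fintype.card V1 := by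
    by_contra h
    push_neg at h
    have h0 : (0 : ℕ) ∈ {k | ∃ S : Set V1, S.ncard = k ∧
        (¬(G1.induce (Sᶜ : Set V1)).Connected ∨ (Sᶜ : Set V1).ncard ≤ 1)} := by
      refine ⟨∅, Set.ncard_empty _, Or.inr ?_⟩
      rw [Set.compl_empty, Set.ncard_univ, Nat.card_eq_fintype_card]
      omega
    have := Nat.sInf_le h0
    omega
  have hκ' : ∀ x : V1, (G1.induce (({x} : Set V1)ᶜ)).Connected := by
    intro x
    by_contra h
    have h1 : (1 : ℕ) ∈ {k | ∃ S : Set V1, S.ncard = k ∧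
        (¬(G1.induce (Sᶜ : Set V1)).Connected ∨ (Sᶜ : Set V1).ncard ≤ 1)} :=
      ⟨{x}, Set.ncard_singleton _, Or.inl h⟩
    have := Nat.sInf_le h1
    omega
  obtain ⟨x0⟩ := hc1.nonempty
  obtain ⟨y0, hy0⟩ : ∃ y : V1, y ≠ x0 := Fintype.exists_ne_of_one_lt_card (by omega) x0
  have hadj0 : ∃ y, G1.Adj x0 y := by
    obtain ⟨w⟩ := hc1.preconnected x0 y0
    cases w with
    | nil => exact absurd rfl hy0
    | cons h p => exact ⟨_, h⟩
  have hV2 : Nonempty V2 := by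
    rcases hadj0 with ⟨y, hy⟩
    have h1 : 0 < δ1 := by
      rw [← hr1 x0]
      exact (Set.ncard_pos (Set.toFinite _)).mpr ⟨y, hy⟩
    rw [← hd] at h1
    exact Fintype.card_pos_iff.mp h1
  obtain ⟨i0⟩ := hV2
  have hsurj : ∀ x y, G1.Adj x y → ∃ i, ℓ x i = y := by
    intro x y hxy
    have hsub : Set.range (ℓ x) ⊆ G1.neighborSet x := by
      rintro _ ⟨i, rfl⟩; exact hadj x i
    have hcard : (G1.neighborSet x).ncard ≤ (Set.range (ℓ x)).ncard := by
      rw [hr1 x, ← Set.image_univ, Set.ncard_image_of_injective _ (hinj x),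
        Set.ncard_univ, Nat.card_eq_fintype_card, hd]
    have heq := Set.eq_of_subset_of_ncard_le hsub hcard (Set.toFinite _)
    have : y ∈ Set.range (ℓ x) := by rw [heq]; exact hxy
    exact this
  have hlab : ∀ x y : V1, ∃ i : V2, G1.Adj x y → ℓ x i = y := by
    intro x y
    by_cases h : G1.Adj x y
    · obtain ⟨i, hi⟩ := hsurj x y h; exact ⟨i, fun _ => hi⟩
    · exact ⟨i0, fun h' => absurd h' h⟩
  choose lab hlabspec using hlab
  unfold edgeConn
  refine le_csInf ?_ ?_
  · refine ⟨G.edgeSet.ncard, G.edgeSet, subset_rfl, rfl, ?_⟩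
    intro hcon
    have hr := hcon.preconnected (x0, i0) (y0, i0)
    have hclosed : ∀ u v : V1 × V2, (G.deleteEdges G.edgeSet).Adj u v →
        u.1 = x0 → v.1 = x0 := by
      intro u v huv _
      obtain ⟨h1, h2⟩ := SimpleGraph.deleteEdges_adj.mp huv
      exact absurd ((SimpleGraph.mem_edgeSet _).mpr h1) h2
    have : (y0, i0).1 = x0 :=
      reach_closed (P := fun p : V1 × V2 => p.1 = x0) hclosed hr rfl
    exact hy0 this
  · rintro k ⟨F, hFsub, rfl, hFdis⟩
    rw [SimpleGraph.connected_iff] at hFdis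
    push_neg at hFdis
    have hpre : ¬(G.deleteEdges F).Preconnected := fun h => (hFdis h).false (x0, i0)
    obtain ⟨a, b, hab⟩ : ∃ a b : V1 × V2, ¬(G.deleteEdges F).Reachable a b := by
      by_contra h; push_neg at h; exact hpre h
    set A : Set (V1 × V2) := {v | (G.deleteEdges F).Reachable a v} with hAdef
    have haA : a ∈ A := SimpleGraph.Reachable.refl a
    have hbA : b ∉ A := hab
    have hAclosed : ∀ u v, u ∈ A → (G.deleteEdges F).Adj u v → v ∈ A :=
      fun u v hu huv => hu.trans huv.reachable
    have hAcross : ∀ u v : V1 × V2, G.Adj u v → u ∈ A → v ∉ A → s(u, v) ∈ F := by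
      intro u v huv hu hv
      by_contra hF
      exact hv (hAclosed u v hu (SimpleGraph.deleteEdges_adj.mpr ⟨huv, hF⟩))
    by_cases hsplit : ∃ (x : V1) (i j : V2), (x, i) ∈ A ∧ (x, j) ∉ A
    · -- Case 1: some cloud is split
      obtain ⟨x, is, js, hiA, hjA⟩ := hsplit
      set S : Set V2 := {i | (x, i) ∈ A} with hSdef
      have hSne : S.Nonempty := ⟨is, hiA⟩
      have hScne : Sᶜ.Nonempty := ⟨js, hjA⟩
      set φ : Sym2 V2 → Sym2 (V1 × V2) := Sym2.map (fun i => (x, i)) with hφdef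
      have hφinj : Function.Injective φ :=
        Sym2.map.injective (fun i j h => congrArg Prod.snd h)
      have hφsub : φ '' edgeBoundary G2 S ⊆ F := by
        rintro _ ⟨e, ⟨heE, i, hi, j, hj, rfl⟩, rfl⟩
        rw [hφdef, Sym2.map_pair_eq]
        exact hAcross (x, i) (x, j)
          (Or.inl ⟨rfl, (SimpleGraph.mem_edgeSet _).mp heE⟩) hi hj
      by_cases hextra : ∃ e ∈ F, e ∉ φ '' edgeBoundary G2 S
      · obtain ⟨e0, he0F, he0⟩ := hextra
        have hsub2 : insert e0 (φ '' edgeBoundary G2 S) ⊆ F :=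
          Set.insert_subset he0F hφsub
        have hcard : (edgeBoundary G2 S).ncard + 1 ≤ F.ncard := by
          calc (edgeBoundary G2 S).ncard + 1
              = (insert e0 (φ '' edgeBoundary G2 S)).ncard := by
                rw [Set.ncard_insert_of_notMem he0 (Set.toFinite _),
                  Set.ncard_image_of_injective _ hφinj]
            _ ≤ F.ncard := Set.ncard_le_ncard hsub2 (Set.toFinite _)
        have hb2 := edgeConn_le_boundary (H := G2) hSne hScne
        unfold edgeConn at hb2
        refine le_trans (min_le_right _ _) ?_
        omega
      · push_neg at hextra
        exfalso
        have hFform : ∀ e ∈ F, ∃ i j : V2, e = s((x, i), (x, j)) := by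
          intro e he
          obtain ⟨e', ⟨_, i, _, j, _, rfl⟩, rfl⟩ := hextra e he
          exact ⟨i, j, (Sym2.map_pair_eq _ _ _)⟩
        have hsurvive : ∀ u v : V1 × V2, G.Adj u v → u.1 ≠ x →
            (G.deleteEdges F).Adj u v := by
          intro u v huv hu
          refine SimpleGraph.deleteEdges_adj.mpr ⟨huv, ?_⟩
          intro hmem
          obtain ⟨i, j, hij⟩ := hFform _ hmem
          rcases Sym2.eq_iff.mp hij with ⟨h1, _⟩ | ⟨h1, _⟩ <;>
            exact hu (congrArg Prod.fst h1)
        have step1 : ∀ z : V1, z ≠ x → ∀ i j : V2,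
            (G.deleteEdges F).Reachable (z, i) (z, j) := by
          intro z hz i j
          refine reach_closed (H := G2)
            (P := fun m => (G.deleteEdges F).Reachable (z, i) (z, m)) ?_
            (hc2.preconnected i j) (SimpleGraph.Reachable.refl _)
          intro p q hpq hp
          exact hp.trans (hsurvive (z, p) (z, q) (Or.inl ⟨rfl, hpq⟩) hz).reachable
        have step2 : ∀ z w : V1, z ≠ x → w ≠ x → G1.Adj z w → ∀ i j : V2,
            (G.deleteEdges F).Reachable (z, i) (w, j) := by
          intro z w hz hw hzw i j
          have hedge : (G.deleteEdges F).Adj (z, lab z w) (w, lab w z) :=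
            hsurvive _ _ (Or.inr ⟨hzw, hlabspec z w hzw, hlabspec w z hzw.symm⟩) hz
          exact ((step1 z hz i (lab z w)).trans hedge.reachable).trans
            (step1 w hw (lab w z) j)
        have step3 : ∀ z w : V1, z ≠ x → w ≠ x → ∀ i j : V2,
            (G.deleteEdges F).Reachable (z, i) (w, j) := by
          intro z w hz hw i j
          have hr := (hκ' x).preconnected ⟨z, hz⟩ ⟨w, hw⟩
          refine reach_closed (H := G1.induce (({x} : Set V1)ᶜ))
            (P := fun w' => (G.deleteEdges F).Reachable (z, i) (w'.1, j)) ?_ hr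
            (step1 z hz i j)
          intro u v huv hu
          exact hu.trans (step2 u.1 v.1 u.2 v.2 huv j j)
        have step4 : ∀ m : V2, ∃ (w : V1) (b : V2), w ≠ x ∧
            (G.deleteEdges F).Adj (x, m) (w, b) := by
          intro m
          have hxw : G1.Adj x (ℓ x m) := hadj x m
          refine ⟨ℓ x m, lab (ℓ x m) x, hxw.ne.symm, ?_⟩
          refine SimpleGraph.deleteEdges_adj.mpr
            ⟨Or.inr ⟨hxw, rfl, hlabspec (ℓ x m) x hxw.symm⟩, ?_⟩
          intro hmem
          obtain ⟨i', j', hij⟩ := hFform _ hmem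
          rcases Sym2.eq_iff.mp hij with ⟨_, h2⟩ | ⟨_, h2⟩ <;>
            exact hxw.ne.symm (congrArg Prod.fst h2)
        obtain ⟨w1, b1, hw1, he1⟩ := step4 is
        obtain ⟨w2, b2, hw2, he2⟩ := step4 js
        have hreach : (G.deleteEdges F).Reachable (x, is) (x, js) :=
          (he1.reachable.trans (step3 w1 w2 hw1 hw2 b1 b2)).trans he2.reachable.symm
        exact hjA (hiA.trans hreach)
    · -- Case 2: all clouds monochromatic
      push_neg at hsplit
      set X : Set V1 := {z | ∃ i, (z, i) ∈ A} with hXdef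
      have hXa : a.1 ∈ X := ⟨a.2, haA⟩
      have hXb : b.1 ∉ X := by rintro ⟨i, hi⟩; exact hbA (hsplit b.1 i b.2 hi)
      set ψ : Sym2 V1 → Sym2 (V1 × V2) :=
        Sym2.lift ⟨fun z w => s((z, lab z w), (w, lab w z)), fun z w => Sym2.eq_swap⟩
        with hψdef
      have hψfst : ∀ e : Sym2 V1, Sym2.map Prod.fst (ψ e) = e := by
        intro e
        induction e using Sym2.ind with
        | _ z w => rw [hψdef, Sym2.lift_mk]; exact Sym2.map_pair_eq _ _ _
      have hψinj : Function.Injective ψ := fun e1 e2 h => by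
        rw [← hψfst e1, ← hψfst e2, h]
      have hψsub : ψ '' edgeBoundary G1 X ⊆ F := by
        rintro _ ⟨e, ⟨heE, z, hz, w, hw, rfl⟩, rfl⟩
        have hzw : G1.Adj z w := (SimpleGraph.mem_edgeSet _).mp heE
        rw [hψdef, Sym2.lift_mk]
        refine hAcross _ _
          (Or.inr ⟨hzw, hlabspec z w hzw, hlabspec w z hzw.symm⟩) ?_ ?_
        · obtain ⟨i, hi⟩ := hz
          exact hsplit z i (lab z w) hi
        · intro hmem
          exact hw ⟨lab w z, hmem⟩
      have hcard : (edgeBoundary G1 X).ncard ≤ F.ncard := by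
        rw [← Set.ncard_image_of_injective _ hψinj]
        exact Set.ncard_le_ncard hψsub (Set.toFinite _)
      have hb1 := edgeConn_le_boundary (H := G1) ⟨a.1, hXa⟩ ⟨b.1, hXb⟩
      unfold edgeConn at hb1
      exact le_trans (min_le_left _ _) (le_trans hb1 hcard)
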